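/- Let 𝒮 be the laminar family of all parts of the partitions 𝒮^t over t ∈ [0, t_max), and for S ∈ 𝒮 with r ∉ S let [a^S, d^S) be the interval of times t with S ∈ 𝒮^t. Then for S ∈ 𝒮 with r ∉ S and terminals s₁ ∈ S and s₂ ∈ R: t_merge(s₁, s₂) < d^S if and only if s₂ ∈ S. -/

import Mathlib

/-- For a set S of the laminar merge family with r ∉ S, active exactly during [a^S, d^S),
and terminals s₁ ∈ S, s₂ ∈ R: t_merge(s₁,s₂) < d^S if and only if s₂ ∈ S. -/
theorem stmt_10 {V : Type*} [MetricSpace V] [Fintype V] (R : Set V) (r : V) (hrR : r ∈ R)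
    (tmerge : V → V → ℝ)
    (htm : ∀ s s' : V, tmerge s s' = sInf {t : ℝ | 0 ≤ t ∧
      Relation.ReflTransGen (fun a b => a ∈ R ∧ b ∈ R ∧ dist a b ≤ 2 * t) s s'})
    (comp : ℝ → V → Set V)
    (hcomp : ∀ t s, comp t s = {s' | s' ∈ R ∧
      Relation.ReflTransGen (fun a b => a ∈ R ∧ b ∈ R ∧ dist a b ≤ 2 * t) s s'})
    (S : Set V) (s₁ : V) (hs₁R : s₁ ∈ R) (hs₁ : s₁ ∈ S) (hrS : r ∉ S)
    (aS dS : ℝ) (haS : 0 ≤ aS) (hlt : aS < dS)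
    (hinterval : ∀ t : ℝ, 0 ≤ t → (comp t s₁ = S ↔ aS ≤ t ∧ t < dS)) :
    ∀ s₂ ∈ R, (tmerge s₁ s₂ < dS ↔ s₂ ∈ S) := by
  intro s₂ hs₂R
  have hmono : ∀ {t t' : ℝ}, t ≤ t' → ∀ {a b : V},
      Relation.ReflTransGen (fun a b => a ∈ R ∧ b ∈ R ∧ dist a b ≤ 2 * t) a b →
      Relation.ReflTransGen (fun a b => a ∈ R ∧ b ∈ R ∧ dist a b ≤ 2 * t') a b := by
    intro t t' htt a b h
    exact Relation.ReflTransGen.mono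
      (fun x y hxy => ⟨hxy.1, hxy.2.1, hxy.2.2.trans (by linarith)⟩) _ _ h
  have hne : (dist s₁ s₂ / 2) ∈ {t : ℝ | 0 ≤ t ∧
      Relation.ReflTransGen (fun a b => a ∈ R ∧ b ∈ R ∧ dist a b ≤ 2 * t) s₁ s₂} :=
    ⟨by positivity, Relation.ReflTransGen.single ⟨hs₁R, hs₂R, by linarith⟩⟩
  have hbdd : BddBelow {t : ℝ | 0 ≤ t ∧
      Relation.ReflTransGen (fun a b => a ∈ R ∧ b ∈ R ∧ dist a b ≤ 2 * t) s₁ s₂} :=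
    ⟨0, fun x hx => hx.1⟩
  rw [htm]
  constructor
  · intro h
    obtain ⟨t, ht, htd⟩ := (csInf_lt_iff hbdd ⟨_, hne⟩).mp h
    have hS := (hinterval (max t aS) (le_trans haS (le_max_right _ _))).mpr
      ⟨le_max_right _ _, max_lt htd hlt⟩
    rw [← hS, hcomp]
    exact ⟨hs₂R, hmono (le_max_left _ _) ht.2⟩
  · intro h
    have hS := (hinterval aS haS).mpr ⟨le_refl _, hlt⟩
    rw [← hS, hcomp] at h
    exact lt_of_le_of_lt (csInf_le hbdd ⟨haS, h.2⟩) hlt
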